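/- Let κ, κ̃ > 0 and ρ, ρ̃ real numbers satisfying the system κρ̃ = κ̃ρ, (κ̃−4)ρ − ρρ̃ + 12 − 2κ = 0, and (κ−4)ρ̃ − ρρ̃ + 12 − 2κ̃ = 0. Then either κ̃ = κ and ρ = ρ̃ ∈ {2, κ−6}, or κ̃ = 16/κ and ρ = −κ/2, ρ̃ = −κ̃/2. -/
import Mathlib


/-- Classification of commuting SLE(κ,ρ) drift parameters, case n = 0. -/
theorem commutation_n0_classification (κ κt ρ ρt : ℝ)
    (hκ : 0 < κ) (hκt : 0 < κt)
    (h1 : κ * ρt = κt * ρ)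
    (h2 : (κt - 4) * ρ - ρ * ρt + 12 - 2 * κ = 0)
    (h3 : (κ - 4) * ρt - ρ * ρt + 12 - 2 * κt = 0) :
    (κt = κ ∧ ρ = ρt ∧ (ρ = 2 ∨ ρ = κ - 6)) ∨
    (κt = 16 / κ ∧ ρ = -κ / 2 ∧ ρt = -κt / 2) := by
  have hκ0 : κ ≠ 0 := ne_of_gt hκ
  have key : (κt - κ) * (κ + 2 * ρ) = 0 := by
    linear_combination (κ/2) * h2 - (κ/2) * h3 + (κ/2 - 2) * h1
  rcases mul_eq_zero.mp key with h | h
  · have hk : κt = κ := by linarith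
    subst hk
    have hρ : ρ = ρt := by
      exact (mul_left_cancel₀ hκ0 h1).symm
    left
    refine ⟨rfl, hρ, ?_⟩
    have hfac : (ρ - 2) * (ρ - (κt - 6)) = 0 := by
      rw [← hρ] at h2; linear_combination -h2
    rcases mul_eq_zero.mp hfac with h' | h'
    · left; linarith
    · right; linarith
  · have hρ : ρ = -κ / 2 := by linarith
    have hρt : ρt = -κt / 2 := by
      have : κ * ρt = κ * (-κt / 2) := by rw [h1, hρ]; ring
      exact mul_left_cancel₀ hκ0 this
    have hkk : κ * κt = 16 := by
      rw [hρ, hρt] at h2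
      nlinarith
    right
    refine ⟨?_, hρ, hρt⟩
    field_simp
    linarith
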